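/- Let n ≥ 2 and q ∈ ℂ[x,z,t] with q(0,0,0) ≠ 0. Identify the coordinate ring A of V_{n,q} = {xⁿy + z² + t³ + x·q = 0} with the subalgebra ℂ[x,z,t][x^{-n}(z²+t³+x·q)] of ℂ[x^{±1},z,t]. Then the ideal I_{n,q} = (xⁿ, z²+t³+x·q) of ℂ[x,z,t] satisfies I_{n,q} = xⁿ·A ∩ ℂ[x,z,t]. -/

import Mathlib

open MvPolynomial LaurentPolynomial Finset

noncomputable section Stmt17Aux

private abbrev Rp := MvPolynomial (Fin 3) ℂ
private abbrev Sp := MvPolynomial (Fin 2) (LaurentPolynomial ℂ)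

private def ι₀ : Rp →ₐ[ℂ] Sp := aeval ![MvPolynomial.C (T 1), X 0, X 1]

private lemma ι₀_X0 : ι₀ (X 0) = MvPolynomial.C (T 1) := by simp [ι₀]
private lemma ι₀_X1 : ι₀ (X 1) = X 0 := by simp [ι₀]
private lemma ι₀_X2 : ι₀ (X 2) = X 1 := by simp [ι₀]

private lemma prime_X0 : Prime (X 0 : Rp) := by
  have := MulEquiv.prime_iff (MvPolynomial.finSuccEquiv ℂ 2).toRingEquiv.toMulEquiv
    (p := (X 0 : Rp))
  rw [← this]
  simpa [MvPolynomial.finSuccEquiv_X_zero] using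
    (Polynomial.prime_X (R := MvPolynomial (Fin 2) ℂ))

private lemma X0_not_dvd (q : Rp) : ¬ (X 0 : Rp) ∣ (X 1 ^ 2 + X 2 ^ 3 + X 0 * q) := by
  rintro ⟨c, hc⟩
  have h := congrArg (aeval (R := ℂ) ![0, X 1, X 2] : Rp →ₐ[ℂ] Rp) hc
  simp only [map_add, map_mul, map_pow, aeval_X, Matrix.cons_val_zero, Matrix.cons_val_one,
    Matrix.head_cons, Matrix.cons_val_two, Matrix.tail_cons, zero_mul, add_zero] at h
  have : ((X 1 : Rp) ^ 2 + X 2 ^ 3).coeff (Finsupp.single 1 2) = 0 := by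
    rw [h]; simp
  rw [MvPolynomial.coeff_add, MvPolynomial.coeff_X_pow, MvPolynomial.coeff_X_pow] at this
  simp [Finsupp.single_eq_single_iff] at this

private lemma keyL (n : ℕ) (q : Rp) :
    ∀ (N : ℕ) (f : Rp) (g : ℕ → Rp),
      X 0 ^ (n*N) * f
        = X 0 ^ n * ∑ k ∈ Finset.range (N+1),
            g k * (X 1 ^ 2 + X 2 ^ 3 + X 0 * q) ^ k * X 0 ^ (n*(N-k))
      → f ∈ Ideal.span {(X 0 ^ n : Rp), X 1 ^ 2 + X 2 ^ 3 + X 0 * q} := by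
  set P : Rp := X 1 ^ 2 + X 2 ^ 3 + X 0 * q with hP
  have hXne : (X 0 : Rp) ^ n ≠ 0 := pow_ne_zero _ (MvPolynomial.X_ne_zero _)
  intro N
  induction N with
  | zero =>
    intro f g h
    rw [Finset.sum_range_one] at h
    simp only [Nat.mul_zero, Nat.sub_self, pow_zero, one_mul, mul_one] at h
    exact Ideal.mem_span_pair.mpr ⟨g 0, 0, by rw [h]; ring⟩
  | succ N ih =>
    intro f g h
    rw [Finset.sum_range_succ] at h
    have hsplit : ∑ k ∈ Finset.range (N+1), g k * P ^ k * X 0 ^ (n*(N+1-k))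
        = (∑ k ∈ Finset.range (N+1), g k * P ^ k * X 0 ^ (n*(N-k))) * X 0 ^ n := by
      rw [Finset.sum_mul]
      refine Finset.sum_congr rfl fun k hk => ?_
      have hk' : k ≤ N := Nat.lt_succ_iff.mp (Finset.mem_range.mp hk)
      have hexp : n*(N+1-k) = n*(N-k) + n := by
        rw [show N+1-k = (N-k)+1 from by omega, Nat.mul_succ]
      rw [hexp, pow_add]; ring
    set S₂ : Rp := ∑ k ∈ Finset.range (N+1), g k * P ^ k * X 0 ^ (n*(N-k)) with hS₂
    rw [hsplit] at h
    simp only [Nat.sub_self, Nat.mul_zero, pow_zero, mul_one] at h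
    rcases Nat.eq_zero_or_pos N with hN | hN
    · subst hN
      have h' : X 0 ^ n * f = X 0 ^ n * (S₂ * X 0 ^ n + g 1 * P ^ 1) := by
        simpa [Nat.mul_one] using h
      have hf := mul_left_cancel₀ hXne h'
      refine Ideal.mem_span_pair.mpr ⟨S₂, g 1, ?_⟩
      rw [hf]; ring
    · have e : X 0 ^ n * (g (N+1) * P ^ (N+1))
          = X 0 ^ (n*(N+1)) * f - X 0 ^ (n+n) * S₂ := by
        rw [h, pow_add]; ring
      have hdvd : X 0 ^ (n+n) ∣ X 0 ^ n * (g (N+1) * P ^ (N+1)) := by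
        rw [e]
        exact dvd_sub (dvd_mul_of_dvd_left (pow_dvd_pow _ (by nlinarith)) f)
          (dvd_mul_right _ _)
      rw [pow_add] at hdvd
      have hdvd2 : (X 0 : Rp) ^ n ∣ g (N+1) * P ^ (N+1) :=
        (mul_dvd_mul_iff_left hXne).mp hdvd
      have hg : (X 0 : Rp) ^ n ∣ g (N+1) :=
        prime_X0.pow_dvd_of_dvd_mul_right n
          (fun hd => X0_not_dvd q (prime_X0.dvd_of_dvd_pow hd)) hdvd2
      obtain ⟨hcof, hco⟩ := hg
      set g' : ℕ → Rp := fun k => if k = N then g N + hcof * P else g k with hg'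
      apply ih f g'
      have key : X 0 ^ n * (X 0 ^ (n*N) * f)
          = X 0 ^ n * (X 0 ^ n * ∑ k ∈ Finset.range (N+1), g' k * P ^ k * X 0 ^ (n*(N-k))) := by
        have hsum : ∑ k ∈ Finset.range (N+1), g' k * P ^ k * X 0 ^ (n*(N-k))
            = S₂ + hcof * P ^ (N+1) := by
          rw [hS₂, Finset.sum_range_succ, Finset.sum_range_succ]
          have h1 : ∀ k ∈ Finset.range N, g' k * P ^ k * X 0 ^ (n*(N-k))
              = g k * P ^ k * X 0 ^ (n*(N-k)) := by
            intro k hk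
            have : k ≠ N := Nat.ne_of_lt (Finset.mem_range.mp hk)
            simp [hg', this]
          rw [Finset.sum_congr rfl h1]
          simp [hg', pow_succ]
          ring
        rw [hsum]
        calc X 0 ^ n * (X 0 ^ (n*N) * f) = X 0 ^ (n*(N+1)) * f := by
              rw [← mul_assoc, ← pow_add,
                show n + n*N = n*(N+1) from by rw [Nat.mul_succ]; omega]
          _ = X 0 ^ n * (S₂ * X 0 ^ n + g (N+1) * P ^ (N+1)) := h
          _ = X 0 ^ n * (X 0 ^ n * (S₂ + hcof * P ^ (N+1))) := by
              rw [hco]; ring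
      exact mul_left_cancel₀ hXne key

private def φ₀ : Rp →ₐ[ℂ] Sp :=
  (MvPolynomial.mapAlgHom (Polynomial.toLaurentAlg)).comp
    ((MvPolynomial.optionEquivRight ℂ (Fin 2)).toAlgHom.comp
      (MvPolynomial.renameEquiv ℂ (_root_.finSuccEquiv 2)).toAlgHom)

private lemma ι₀_eq_φ₀ : ι₀ = φ₀ := by
  apply MvPolynomial.algHom_ext
  intro i
  have e1 : (_root_.finSuccEquiv 2) 0 = none := rfl
  have e2 : (_root_.finSuccEquiv 2) 1 = some 0 := rfl
  have e3 : (_root_.finSuccEquiv 2) 2 = some 1 := rfl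
  have ec : (Polynomial.toLaurentAlg (R := ℂ) :
      Polynomial ℂ →+* LaurentPolynomial ℂ) = Polynomial.toLaurent :=
    RingHom.ext fun x => by simp [Polynomial.toLaurentAlg_apply]
  fin_cases i <;>
    simp [ι₀, φ₀, MvPolynomial.mapAlgHom_apply, e1, e2, e3, ec,
      MvPolynomial.optionEquivRight_X_none, MvPolynomial.optionEquivRight_X_some,
      Polynomial.toLaurent_X]

private lemma ι₀_inj : Function.Injective ι₀ := by
  rw [ι₀_eq_φ₀]
  show Function.Injective
    ((MvPolynomial.mapAlgHom (Polynomial.toLaurentAlg) : _ →ₐ[ℂ] Sp) ∘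
      ((MvPolynomial.optionEquivRight ℂ (Fin 2)) ∘
        (MvPolynomial.renameEquiv ℂ (_root_.finSuccEquiv 2))))
  refine Function.Injective.comp ?_ (Function.Injective.comp
    (MvPolynomial.optionEquivRight ℂ (Fin 2)).injective
    (MvPolynomial.renameEquiv ℂ (_root_.finSuccEquiv 2)).injective)
  have : (MvPolynomial.mapAlgHom (σ := Fin 2) (Polynomial.toLaurentAlg (R := ℂ)) :
      MvPolynomial (Fin 2) (Polynomial ℂ) → Sp) = MvPolynomial.map Polynomial.toLaurent := by
    have ec : (Polynomial.toLaurentAlg (R := ℂ) :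
        Polynomial ℂ →+* LaurentPolynomial ℂ) = Polynomial.toLaurent :=
      RingHom.ext fun x => by simp [Polynomial.toLaurentAlg_apply]
    funext p
    simp [MvPolynomial.mapAlgHom_apply, ec]
  rw [this]
  exact MvPolynomial.map_injective _ Polynomial.toLaurent_injective

private lemma adjoin_struct (w : Sp)
    {a : Sp} (ha : a ∈ Algebra.adjoin ℂ
      ({MvPolynomial.C (T 1), X 0, X 1, w} : Set Sp)) :
    ∃ p : Polynomial Rp, Polynomial.eval₂ (ι₀ : Rp →ₐ[ℂ] Sp).toRingHom w p = a := by
  induction ha using Algebra.adjoin_induction with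
  | mem x hx =>
    rcases hx with h | h | h | h
    · exact ⟨Polynomial.C (X 0), by rw [h, Polynomial.eval₂_C]; exact ι₀_X0⟩
    · exact ⟨Polynomial.C (X 1), by rw [h, Polynomial.eval₂_C]; exact ι₀_X1⟩
    · exact ⟨Polynomial.C (X 2), by rw [h, Polynomial.eval₂_C]; exact ι₀_X2⟩
    · rw [Set.mem_singleton_iff] at h
      exact ⟨Polynomial.X, by rw [h, Polynomial.eval₂_X]⟩
  | algebraMap r =>
    exact ⟨Polynomial.C (MvPolynomial.C r), by
      rw [Polynomial.eval₂_C]; exact (ι₀ : Rp →ₐ[ℂ] Sp).commutes r⟩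
  | add x y hx hy ihx ihy =>
    obtain ⟨px, hpx⟩ := ihx; obtain ⟨py, hpy⟩ := ihy
    exact ⟨px + py, by rw [Polynomial.eval₂_add, hpx, hpy]⟩
  | mul x y hx hy ihx ihy =>
    obtain ⟨px, hpx⟩ := ihx; obtain ⟨py, hpy⟩ := ihy
    exact ⟨px * py, by rw [Polynomial.eval₂_mul, hpx, hpy]⟩

private lemma ι₀_mem_adjoin (w : Sp) (r : Rp) :
    ι₀ r ∈ Algebra.adjoin ℂ ({MvPolynomial.C (T 1), X 0, X 1, w} : Set Sp) := by
  have h1 : ι₀ r ∈ (aeval ![MvPolynomial.C (T 1), X 0, X 1] : Rp →ₐ[ℂ] Sp).range :=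
    ⟨r, rfl⟩
  rw [← Algebra.adjoin_range_eq_range_aeval] at h1
  refine Algebra.adjoin_mono ?_ h1
  rintro _ ⟨i, rfl⟩
  fin_cases i <;> simp

end Stmt17Aux

theorem stmt17 (n : ℕ) (hn : 2 ≤ n) (q : MvPolynomial (Fin 3) ℂ)
    (hq : eval (fun _ => (0 : ℂ)) q ≠ 0)
    (ι : MvPolynomial (Fin 3) ℂ →ₐ[ℂ] MvPolynomial (Fin 2) (LaurentPolynomial ℂ))
    (hι : ι = aeval ![MvPolynomial.C (T 1), X 0, X 1])
    (w : MvPolynomial (Fin 2) (LaurentPolynomial ℂ))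
    (hw : w = MvPolynomial.C (T (-(n : ℤ))) *
        (X 0 ^ 2 + X 1 ^ 3 + MvPolynomial.C (T 1) * ι q)) :
    ∀ f : MvPolynomial (Fin 3) ℂ,
      f ∈ Ideal.span {(X 0 ^ n : MvPolynomial (Fin 3) ℂ),
          X 1 ^ 2 + X 2 ^ 3 + X 0 * q} ↔
      ∃ a ∈ Algebra.adjoin ℂ
          ({MvPolynomial.C (T 1), X 0, X 1, w} :
            Set (MvPolynomial (Fin 2) (LaurentPolynomial ℂ))),
        ι f = MvPolynomial.C (T (n : ℤ)) * a := by
  have hι' : ι = ι₀ := hι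
  subst hι'
  set PR : Rp := X 1 ^ 2 + X 2 ^ 3 + X 0 * q with hPR
  set Ps : Sp := X 0 ^ 2 + X 1 ^ 3 + MvPolynomial.C (T 1) * ι₀ q with hPs
  -- basic identities
  have hCT : (MvPolynomial.C (T 1) : Sp) ^ n = MvPolynomial.C (T (n : ℤ)) := by
    rw [← map_pow, T_pow, mul_one]
  have hιP : ι₀ PR = Ps := by
    rw [hPR, hPs]
    simp only [map_add, map_mul, map_pow, ι₀_X0, ι₀_X1, ι₀_X2]
  have hxw : MvPolynomial.C (T (n : ℤ)) * w = Ps := by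
    rw [hw, ← mul_assoc, ← map_mul, ← T_add, add_neg_cancel, T_zero, map_one, one_mul]
  intro f
  constructor
  · -- forward
    intro hf
    obtain ⟨u, v, huv⟩ := Ideal.mem_span_pair.mp hf
    refine ⟨ι₀ u + ι₀ v * w, ?_, ?_⟩
    · exact add_mem (ι₀_mem_adjoin w u)
        (mul_mem (ι₀_mem_adjoin w v)
          (Algebra.subset_adjoin (by simp)))
    · rw [← huv, map_add, map_mul, map_mul, map_pow, ι₀_X0, hCT, hιP, ← hxw]
      ring
  · -- backward
    rintro ⟨a, ha, hfa⟩
    obtain ⟨p, hp⟩ := adjoin_struct w ha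
    set N := p.natDegree with hN
    have expand : a = ∑ k ∈ Finset.range (N+1), ι₀ (p.coeff k) * w ^ k := by
      rw [← hp, Polynomial.eval₂_eq_sum_range]
      rfl
    have hterm : ∀ k, k ≤ N →
        (MvPolynomial.C (T 1) : Sp) ^ (n*N) * (MvPolynomial.C (T (n:ℤ)) * w ^ k)
          = MvPolynomial.C (T 1) ^ n * (Ps ^ k * MvPolynomial.C (T 1) ^ (n*(N-k))) := by
      intro k hk
      have hsub : n*N = n*(N-k) + n*k := by
        rw [← Nat.mul_add, Nat.sub_add_cancel hk]
      rw [hsub, pow_add, pow_mul (MvPolynomial.C (T 1) : Sp) n k, hCT, ← hxw, mul_pow]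
      ring
    have main : X 0 ^ (n*N) * f
        = X 0 ^ n * ∑ k ∈ Finset.range (N+1), p.coeff k * PR ^ k * X 0 ^ (n*(N-k)) := by
      apply ι₀_inj
      rw [map_mul, map_mul, map_pow, map_pow, map_sum, ι₀_X0, hfa, expand,
        Finset.mul_sum, Finset.mul_sum, Finset.mul_sum]
      refine Finset.sum_congr rfl fun k hk => ?_
      have hk' : k ≤ N := Nat.lt_succ_iff.mp (Finset.mem_range.mp hk)
      rw [map_mul, map_mul, map_pow, map_pow, ι₀_X0, hιP]
      linear_combination ι₀ (p.coeff k) * hterm k hk'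
    exact keyL n q N f p.coeff main
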